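/- For every integer d ≥ 2, the function f : ℝ^d → ℂ defined by f(x_1,...,x_d) = exp(x_1 x_2 ··· x_d) is NOT an exponential polynomial in d variables, although for each k ∈ {1,...,d} and each fixed point (a_1,...,a_{k-1},a_{k+1},...,a_d) ∈ ℝ^{d-1}, the one-variable function x_k ↦ f(a_1,...,a_{k-1},x_k,a_{k+1},...,a_d) is an exponential polynomial on ℝ. -/

import Mathlib

open Filter Topology

/-- `f : ℝ^d → ℂ` is an exponential polynomial: a finite sum of terms
`P_k(x) * exp(⟨λ_k, x⟩)` with `P_k` complex polynomials and `λ_k ∈ ℂ^d`. -/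
def IsExpPoly {d : ℕ} (f : (Fin d → ℝ) → ℂ) : Prop :=
  ∃ (m : ℕ) (P : Fin m → MvPolynomial (Fin d) ℂ) (lam : Fin m → Fin d → ℂ),
    ∀ x : Fin d → ℝ,
      f x = ∑ k, MvPolynomial.eval (fun i => (x i : ℂ)) (P k) *
        Complex.exp (∑ i, lam k i * x i)

/-- `g : ℝ → ℂ` is an exponential polynomial: a finite sum of terms
`Q_j(t) * exp(μ_j t)` with `Q_j` complex polynomials and `μ_j ∈ ℂ`. -/
def IsExpPoly1 (g : ℝ → ℂ) : Prop :=
  ∃ (m : ℕ) (Q : Fin m → Polynomial ℂ) (mu : Fin m → ℂ),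
    ∀ t : ℝ, g t = ∑ j, Polynomial.eval (t : ℂ) (Q j) * Complex.exp (mu j * t)

lemma aux_real {d : ℕ} (hd : 2 ≤ d) (c : ℝ) (n : ℕ) :
    Tendsto (fun t : ℝ => t ^ n * Real.exp (c * t - t ^ d)) atTop (𝓝 0) := by
  have h0 : Tendsto (fun t : ℝ => t ^ n * Real.exp (-t)) atTop (𝓝 0) :=
    Real.tendsto_pow_mul_exp_neg_atTop_nhds_zero n
  apply tendsto_of_tendsto_of_tendsto_of_le_of_le' tendsto_const_nhds h0
  · filter_upwards [eventually_ge_atTop (0 : ℝ)] with t ht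
    positivity
  · filter_upwards [eventually_ge_atTop (1 : ℝ), eventually_ge_atTop (c + 1)] with t ht1 htc
    have ht0 : (0:ℝ) ≤ t := le_trans zero_le_one ht1
    have h1 : t ^ 2 ≤ t ^ d := pow_le_pow_right₀ ht1 hd
    have h2 : (c + 1) * t ≤ t * t := mul_le_mul_of_nonneg_right htc ht0
    have h3 : c * t - t ^ d ≤ -t := by nlinarith [h1, h2]
    exact mul_le_mul_of_nonneg_left (Real.exp_le_exp.2 h3) (pow_nonneg ht0 n)

lemma aux_cx {d : ℕ} (hd : 2 ≤ d) (c : ℂ) (μ : ℂ) (n : ℕ) :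
    Tendsto (fun t : ℝ => c * (t : ℂ) ^ n * Complex.exp (μ * t - (t : ℂ) ^ d))
      atTop (𝓝 0) := by
  rw [tendsto_zero_iff_norm_tendsto_zero]
  have key : ∀ t : ℝ, 0 ≤ t →
      ‖c * (t : ℂ) ^ n * Complex.exp (μ * t - (t : ℂ) ^ d)‖
        = ‖c‖ * (t ^ n * Real.exp (μ.re * t - t ^ d)) := by
    intro t ht
    rw [norm_mul, norm_mul, Complex.norm_exp]
    have hre : (μ * t - (t : ℂ) ^ d).re = μ.re * t - t ^ d := by
      have h : ((t : ℂ)) ^ d = (((t ^ d : ℝ)) : ℂ) := by push_cast; ring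
      rw [h]
      simp [Complex.sub_re, Complex.mul_re, ← Complex.ofReal_pow]
    rw [hre]
    have : ‖(t : ℂ) ^ n‖ = t ^ n := by
      rw [norm_pow, Complex.norm_real, Real.norm_of_nonneg ht]
    rw [this]; ring
  have h0 : Tendsto (fun t : ℝ => ‖c‖ * (t ^ n * Real.exp (μ.re * t - t ^ d)))
      atTop (𝓝 (‖c‖ * 0)) := (aux_real hd μ.re n).const_mul _
  rw [mul_zero] at h0
  apply h0.congr'
  filter_upwards [eventually_ge_atTop (0 : ℝ)] with t ht
  exact (key t ht).symm

theorem exp_prod_separately_but_not_jointly_expPoly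
    {d : ℕ} (hd : 2 ≤ d) :
    ¬ IsExpPoly (fun x : Fin d → ℝ => Complex.exp (∏ i, (x i : ℂ))) ∧
    ∀ (k : Fin d) (a : Fin d → ℝ),
      IsExpPoly1 (fun t : ℝ =>
        Complex.exp (∏ i, ((Function.update a k t) i : ℂ))) := by
  constructor
  · rintro ⟨m, P, lam, hP⟩
    -- restrict to the diagonal
    have hdiag : ∀ t : ℝ, Complex.exp ((t : ℂ) ^ d)
        = ∑ k, MvPolynomial.eval (fun _ => (t : ℂ)) (P k) *
            Complex.exp ((∑ i, lam k i) * t) := by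
      intro t
      have := hP (fun _ => t)
      simpa [Finset.prod_const, Finset.card_univ, Finset.sum_mul] using this
    -- the function F tends to 0 but is constantly 1
    set F : ℝ → ℂ := fun t => ∑ k, MvPolynomial.eval (fun _ => (t : ℂ)) (P k) *
        Complex.exp ((∑ i, lam k i) * t - (t : ℂ) ^ d) with hF
    have hF1 : ∀ t : ℝ, F t = 1 := by
      intro t
      have : F t = (∑ k, MvPolynomial.eval (fun _ => (t : ℂ)) (P k) *
          Complex.exp ((∑ i, lam k i) * t)) * Complex.exp (-(t : ℂ) ^ d) := by
        rw [Finset.sum_mul]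
        apply Finset.sum_congr rfl
        intro k _
        rw [mul_assoc, ← Complex.exp_add]
        ring_nf
      rw [this, ← hdiag t, ← Complex.exp_add]
      simp
    have hF0 : Tendsto F atTop (𝓝 0) := by
      rw [hF]
      have : (0 : ℂ) = ∑ _k : Fin m, 0 := by simp
      rw [this]
      apply tendsto_finset_sum
      intro k _
      -- expand the polynomial evaluation
      have hev : ∀ t : ℝ, MvPolynomial.eval (fun _ => (t : ℂ)) (P k) *
          Complex.exp ((∑ i, lam k i) * t - (t : ℂ) ^ d)
          = ∑ s ∈ (P k).support, (P k).coeff s * (t : ℂ) ^ (∑ i, s i) *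
              Complex.exp ((∑ i, lam k i) * t - (t : ℂ) ^ d) := by
        intro t
        rw [MvPolynomial.eval_eq', Finset.sum_mul]
        apply Finset.sum_congr rfl
        intro s _
        rw [Finset.prod_pow_eq_pow_sum]
      have h0 : (0 : ℂ) = ∑ _s ∈ (P k).support, 0 := by simp
      rw [h0]
      apply Tendsto.congr (fun t => (hev t).symm)
      apply tendsto_finset_sum
      intro s _
      exact aux_cx hd _ _ _
    have h1 : Tendsto (fun _ : ℝ => (1 : ℂ)) atTop (𝓝 0) :=
      hF0.congr (fun t => hF1 t)
    exact one_ne_zero (tendsto_nhds_unique tendsto_const_nhds h1)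
  · intro k a
    set c : ℂ := ∏ i ∈ Finset.univ.erase k, ((a i : ℝ) : ℂ) with hc
    refine ⟨1, fun _ => 1, fun _ => c, ?_⟩
    intro t
    have hprod : (∏ i, ((Function.update a k t) i : ℂ)) = (t : ℂ) * c := by
      rw [← Finset.mul_prod_erase Finset.univ _ (Finset.mem_univ k)]
      simp only [Function.update_self]
      congr 1
      apply Finset.prod_congr rfl
      intro i hi
      rw [Function.update_of_ne (Finset.ne_of_mem_erase hi)]
    simp [hprod, mul_comm]
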